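/- The function x ↦ 1 / log(1 + 1/x) is concave on the positive reals. -/

import Mathlib

open Real Set

private lemma log_ge_div (y : ℝ) (hy : 0 < y) : y / (1 + y) ≤ Real.log (1 + y) := by
  have h1 : (0:ℝ) < 1 + y := by linarith
  have h2 := Real.log_le_sub_one_of_pos (x := (1 + y)⁻¹) (by positivity)
  rw [Real.log_inv] at h2
  have h3 : -((1+y)⁻¹ - 1) ≤ Real.log (1 + y) := by linarith
  have heq : -((1+y)⁻¹ - 1) = y / (1 + y) := by field_simp; ring
  linarith [heq ▸ h3]

private lemma key_ineq : ∀ x ∈ Set.Ioi (0:ℝ), 2 ≤ (2*x + 1) * Real.log (1 + 1/x) := by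
  set g : ℝ → ℝ := fun y => (2 + y) * Real.log (1 + y) - 2 * y with hg
  have hder : ∀ y ∈ Set.Ioi (0:ℝ), HasDerivAt g (Real.log (1 + y) + (2 + y) / (1 + y) - 2) y := by
    intro y hy
    have hy0 : (0:ℝ) < y := hy
    have h1 : (0:ℝ) < 1 + y := by linarith
    have hlog : HasDerivAt (fun y : ℝ => Real.log (1 + y)) (1 / (1 + y)) y := by
      simpa using ((hasDerivAt_id y).const_add 1).log h1.ne'
    have h := (((hasDerivAt_id y).const_add 2).mul hlog).sub ((hasDerivAt_id y).const_mul 2)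
    refine h.congr_deriv ?_
    simp only [id_eq, one_mul, mul_one]
    ring
  have hmono : MonotoneOn g (Set.Ici 0) := by
    apply monotoneOn_of_deriv_nonneg (convex_Ici 0)
    · apply ContinuousOn.sub
      · apply ContinuousOn.mul
        · exact (continuous_const.add continuous_id).continuousOn
        · apply ContinuousOn.log
          · exact (continuous_const.add continuous_id).continuousOn
          · intro y hy
            have h0 : (0:ℝ) ≤ y := hy
            positivity
      · exact (continuous_const.mul continuous_id).continuousOn
    · rw [interior_Ici]
      exact fun y hy => ((hder y hy).differentiableAt).differentiableWithinAt
    · rw [interior_Ici]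
      intro y hy
      rw [(hder y hy).deriv]
      have hy' : (0:ℝ) < y := hy
      have h1 : (0:ℝ) < 1 + y := by linarith
      have h2 : y / (1 + y) ≤ Real.log (1 + y) := log_ge_div y hy'
      have h3 : (2 + y) / (1 + y) - 2 = -(y / (1 + y)) := by field_simp; ring
      linarith
  intro x hx
  have hx0 : (0:ℝ) < x := hx
  have hgy := hmono (Set.self_mem_Ici) (Set.mem_Ici.2 (by positivity : (0:ℝ) ≤ 1/x))
    (by positivity : (0:ℝ) ≤ 1/x)
  simp only [hg, Real.log_one, add_zero, mul_zero, sub_zero] at hgy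
  have h1 : (0:ℝ) < 1 + 1/x := by positivity
  have hmul : (2*x + 1) * Real.log (1 + 1/x) = x * ((2 + 1/x) * Real.log (1 + 1/x)) := by
    field_simp
  have h2 : 2 * (1/x) ≤ (2 + 1/x) * Real.log (1 + 1/x) := by
    simpa using hgy
  calc (2:ℝ) = x * (2 * (1/x)) := by field_simp
    _ ≤ x * ((2 + 1/x) * Real.log (1 + 1/x)) := mul_le_mul_of_nonneg_left h2 hx0.le
    _ = (2*x + 1) * Real.log (1 + 1/x) := hmul.symm

/-- The function `x ↦ 1 / log (1 + 1/x)` is concave on the positive reals. -/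
theorem concave_one_div_log_one_add_inv :
    ConcaveOn ℝ (Set.Ioi (0 : ℝ)) (fun x : ℝ => 1 / Real.log (1 + 1 / x)) := by
  set L : ℝ → ℝ := fun x => Real.log (1 + 1/x) with hLdef
  have hL0 : ∀ x ∈ Set.Ioi (0:ℝ), 0 < L x := by
    intro x hx
    have hx0 : (0:ℝ) < x := hx
    apply Real.log_pos
    have : (0:ℝ) < 1/x := by positivity
    linarith
  have hLd : ∀ x ∈ Set.Ioi (0:ℝ), HasDerivAt L (-(x^2 + x)⁻¹) x := by
    intro x hx
    have hx0 : (0:ℝ) < x := hx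
    have h1 : (0:ℝ) < 1 + 1/x := by positivity
    have hinner : HasDerivAt (fun x : ℝ => 1 + 1/x) (-(x^2)⁻¹) x := by
      simpa [one_div] using (hasDerivAt_inv hx0.ne').const_add 1
    have h := hinner.log h1.ne'
    convert h using 1
    field_simp
  set F' : ℝ → ℝ := fun x => ((x^2 + x) * (L x)^2)⁻¹ with hF'def
  have hFd : ∀ x ∈ Set.Ioi (0:ℝ), HasDerivAt (fun x : ℝ => 1 / L x) (F' x) x := by
    intro x hx
    have hx0 : (0:ℝ) < x := hx
    have hL := hL0 x hx
    have h := (hLd x hx).fun_inv hL.ne'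
    have heq : (fun y : ℝ => (L y)⁻¹) = fun y : ℝ => 1 / L y := by
      funext y; rw [one_div]
    rw [heq] at h
    refine h.congr_deriv ?_
    have hxx : (0:ℝ) < x^2 + x := by positivity
    rw [hF'def]
    field_simp
  set F'' : ℝ → ℝ := fun x =>
    -(((2*x + 1) * (L x)^2 + (x^2 + x) * (2 * L x * (-(x^2 + x)⁻¹))) / ((x^2 + x) * (L x)^2)^2)
    with hF''def
  have hF'd : ∀ x ∈ Set.Ioi (0:ℝ), HasDerivAt F' (F'' x) x := by
    intro x hx
    have hx0 : (0:ℝ) < x := hx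
    have hL := hL0 x hx
    have hxx : (0:ℝ) < x^2 + x := by positivity
    have hpoly : HasDerivAt (fun x : ℝ => x^2 + x) (2*x + 1) x := by
      simpa using (hasDerivAt_pow 2 x).fun_add (hasDerivAt_id x)
    have hL2 : HasDerivAt (fun y : ℝ => (L y)^2) (2 * L x * (-(x^2 + x)⁻¹)) x := by
      simpa [mul_comm, mul_assoc] using (hLd x hx).fun_pow 2
    have hprod := hpoly.fun_mul hL2
    have hne : (x^2 + x) * (L x)^2 ≠ 0 := by positivity
    have h2 := hprod.fun_inv hne
    exact h2.congr_deriv (by rw [neg_div])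
  apply concaveOn_of_hasDerivWithinAt2_nonpos (f' := F') (f'' := F'') (convex_Ioi 0)
  · exact fun x hx => ((hFd x hx).continuousAt).continuousWithinAt
  · rw [interior_Ioi]
    exact fun x hx => (hFd x hx).hasDerivWithinAt
  · rw [interior_Ioi]
    exact fun x hx => (hF'd x hx).hasDerivWithinAt
  · rw [interior_Ioi]
    intro x hx
    have hx0 : (0:ℝ) < x := hx
    have hL := hL0 x hx
    have hxx : (0:ℝ) < x^2 + x := by positivity
    have hkey := key_ineq x hx
    rw [hF''def]
    have hnum : 0 ≤ (2*x + 1) * (L x)^2 + (x^2 + x) * (2 * L x * (-(x^2 + x)⁻¹)) := by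
      have heq : (x^2 + x) * (2 * L x * (-(x^2 + x)⁻¹)) = -(2 * L x) := by
        field_simp
      rw [heq]
      nlinarith [hL]
    have hden : (0:ℝ) < ((x^2 + x) * (L x)^2)^2 := by positivity
    simp only [neg_nonpos]
    exact div_nonneg hnum hden.le
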